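/- Let X be a path-connected space with continuous involution σ and x₀ a point with σ(x₀) ≠ x₀. If σ has a fixed point y ∈ X, then the short exact sequence e → π₁(X, x₀) → Γ(X, x₀) → ℤ/2ℤ → e is right-split: for any path γ₀ from x₀ to y, the class γ₁ := σ(γ₀)⁻¹ ∘ γ₀ lies in η⁻¹(1) and has order two in Γ(X, x₀), so 1 ↦ γ₁ defines a splitting homomorphism ℤ/2ℤ → Γ(X, x₀). -/

import Mathlib

open scoped Topology

attribute [local instance] Path.Homotopic.setoid

variable {X : Type*} [TopologicalSpace X]

/-- Transport of the endpoint of a path-homotopy class along an equality. -/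
noncomputable def castEnd {x y z : X} (h : y = z) (q : Path.Homotopic.Quotient x y) :
    Path.Homotopic.Quotient x z := h ▸ q

/-- Transport of the starting point of a path-homotopy class along an equality. -/
noncomputable def castStart {y z x : X} (h : y = z) (q : Path.Homotopic.Quotient y x) :
    Path.Homotopic.Quotient z x := h ▸ q

/-- Reversal of a path-homotopy class, `[γ] ↦ [t ↦ γ(1-t)]`. -/
noncomputable def symmQ {x y : X} (q : Path.Homotopic.Quotient x y) : Path.Homotopic.Quotient y x :=
  Quotient.map Path.symm (fun _ _ h => Nonempty.map Path.Homotopy.symm₂ h) q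

/-- The underlying set of the extended fundamental group `Γ(X, x₀)` of
`(X, σ, x₀)`: homotopy classes of paths starting at `x₀` and ending at
either `x₀` or `σ(x₀)`. -/
abbrev ExtGamma (f : C(X, X)) (x₀ : X) : Type _ :=
  Path.Homotopic.Quotient x₀ x₀ ⊕ Path.Homotopic.Quotient x₀ (f x₀)

/-- The product `γ₂ · γ₁` on `Γ(X, x₀)`: equal to the concatenation
`γ₁ ∘ γ₂` (first `γ₂`, then `γ₁`) if `γ₂` ends at `x₀`, and to
`σ(γ₁) ∘ γ₂` (first `γ₂`, then `σ ∘ γ₁`) if `γ₂` ends at `σ(x₀)`. -/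
noncomputable def extMul (f : C(X, X)) (hf : ∀ x, f (f x) = x) (x₀ : X) :
    ExtGamma f x₀ → ExtGamma f x₀ → ExtGamma f x₀
  | Sum.inl p, Sum.inl q => Sum.inl (Path.Homotopic.Quotient.trans p q)
  | Sum.inl p, Sum.inr q => Sum.inr (Path.Homotopic.Quotient.trans p q)
  | Sum.inr p, Sum.inl q => Sum.inr (Path.Homotopic.Quotient.trans p (Path.Homotopic.Quotient.map q f))
  | Sum.inr p, Sum.inr q => Sum.inl (Path.Homotopic.Quotient.trans p (castEnd (hf x₀) (Path.Homotopic.Quotient.map q f)))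

/-- The endpoint map `η : Γ(X, x₀) → ℤ/2ℤ`. -/
def etaMap (f : C(X, X)) (x₀ : X) : ExtGamma f x₀ → ZMod 2 :=
  Sum.elim (fun _ => 0) (fun _ => 1)

/- Auxiliary lemmas -/

lemma castStart_mk {u v x : X} (h : u = v) (γ : Path u x) :
    castStart h (⟦γ⟧ : Path.Homotopic.Quotient u x) = ⟦γ.cast h.symm rfl⟧ := by
  subst h
  show (⟦γ⟧ : Path.Homotopic.Quotient u x) = _
  congr 1

lemma castEnd_mk {x u v : X} (h : u = v) (γ : Path x u) :
    castEnd h (⟦γ⟧ : Path.Homotopic.Quotient x u) = ⟦γ.cast rfl h.symm⟧ := by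
  subst h
  show (⟦γ⟧ : Path.Homotopic.Quotient x u) = _
  congr 1

lemma compQ_assoc {w x y z : X} (a : Path.Homotopic.Quotient w x)
    (b : Path.Homotopic.Quotient x y) (c : Path.Homotopic.Quotient y z) :
    (a.trans b).trans c = a.trans (b.trans c) := by
  refine Quotient.inductionOn₃ a b c fun p q r => ?_
  exact Quotient.sound ⟨Path.Homotopy.transAssoc p q r⟩

lemma compQ_symm {x y : X} (a : Path.Homotopic.Quotient x y) :
    a.trans (symmQ a) = ⟦Path.refl x⟧ := by
  refine Quotient.inductionOn a fun p => ?_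
  exact Quotient.sound ⟨(Path.Homotopy.reflTransSymm p).symm⟩

lemma reflQ_comp {x y : X} (a : Path.Homotopic.Quotient x y) :
    Path.Homotopic.Quotient.trans ⟦Path.refl x⟧ a = a := by
  refine Quotient.inductionOn a fun p => ?_
  exact Quotient.sound ⟨Path.Homotopy.reflTrans p⟩

lemma compQ_refl {x y : X} (a : Path.Homotopic.Quotient x y) :
    a.trans ⟦Path.refl y⟧ = a := by
  refine Quotient.inductionOn a fun p => ?_
  exact Quotient.sound ⟨Path.Homotopy.transRefl p⟩

lemma compQ_cancel {x y z : X} (a : Path.Homotopic.Quotient x y)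
    (b : Path.Homotopic.Quotient y z) :
    (a.trans b).trans ((symmQ b).trans (symmQ a)) = ⟦Path.refl x⟧ := by
  rw [compQ_assoc, ← compQ_assoc b, compQ_symm b, reflQ_comp, compQ_symm a]

/-- The key computation: the class `γ₁` squares to the identity loop. -/
lemma gammaOne_sq (f : C(X, X)) (hf : ∀ x, f (f x) = x) (x₀ : X)
    (y : X) (hy : f y = y) (p : Path x₀ y) :
    (Path.Homotopic.Quotient.trans ⟦p⟧
        (castStart hy (symmQ (Path.Homotopic.Quotient.map ⟦p⟧ f)))).trans
      (castEnd (hf x₀) ((Path.Homotopic.Quotient.trans ⟦p⟧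
        (castStart hy (symmQ (Path.Homotopic.Quotient.map ⟦p⟧ f)))).map f)) =
    ⟦Path.refl x₀⟧ := by
  set c' : Path (f x₀) y := (p.map f.continuous).cast rfl hy.symm with hc'
  have h4 : (p.map f.continuous).symm.cast hy.symm rfl = c'.symm := by
    ext t; rfl
  have hγ : Path.Homotopic.Quotient.trans ⟦p⟧
      (castStart hy (symmQ (Path.Homotopic.Quotient.map ⟦p⟧ f)))
      = ⟦p.trans c'.symm⟧ := by
    rw [show Path.Homotopic.Quotient.map ⟦p⟧ f = ⟦p.map f.continuous⟧ from rfl]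
    rw [show symmQ (⟦p.map f.continuous⟧ : Path.Homotopic.Quotient (f x₀) (f y))
        = ⟦(p.map f.continuous).symm⟧ from rfl]
    rw [castStart_mk, h4]
    rfl
  rw [hγ]
  have hmap : Path.Homotopic.Quotient.map (⟦p.trans c'.symm⟧ :
      Path.Homotopic.Quotient x₀ (f x₀)) f = ⟦(p.trans c'.symm).map f.continuous⟧ := rfl
  rw [hmap, castEnd_mk]
  have key : ((p.trans c'.symm).map f.continuous).cast rfl (hf x₀).symm
      = c'.trans p.symm := by
    ext t
    simp only [Path.cast_coe, Path.map_coe, Function.comp_apply, Path.trans_apply, hc']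
    split_ifs with h
    · rfl
    · simp [Path.symm_apply, hf]
  rw [key]
  have : (⟦c'.trans p.symm⟧ : Path.Homotopic.Quotient (f x₀) x₀)
      = (symmQ ⟦c'.symm⟧).trans (symmQ ⟦p⟧) := by
    rw [show symmQ (⟦c'.symm⟧ : Path.Homotopic.Quotient y (f x₀)) = ⟦c'.symm.symm⟧ from rfl,
      Path.symm_symm]
    rfl
  rw [this]
  exact compQ_cancel ⟦p⟧ ⟦c'.symm⟧

/- STATEMENT 8: if `σ` has a fixed point `y`, then for any path `γ₀` from
`x₀` to `y`, the class `γ₁ := σ(γ₀)⁻¹ ∘ γ₀` (first `γ₀`, then the reverse of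
`σ ∘ γ₀`) lies in `η⁻¹(1)` and squares to the identity of `Γ(X, x₀)`, so
`1 ↦ γ₁` defines a right splitting `ℤ/2ℤ → Γ(X, x₀)` of the short exact
sequence `e → π₁(X, x₀) → Γ(X, x₀) → ℤ/2ℤ → e`. -/
theorem extGamma_split_of_fixed_point
    (f : C(X, X)) (hf : ∀ x, f (f x) = x) (x₀ : X) (hx₀ : f x₀ ≠ x₀)
    (y : X) (hy : f y = y) (q₀ : Path.Homotopic.Quotient x₀ y) :
    etaMap f x₀
        (Sum.inr (Path.Homotopic.Quotient.trans q₀ (castStart hy (symmQ (Path.Homotopic.Quotient.map q₀ f)))) : ExtGamma f x₀) = 1 ∧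
    extMul f hf x₀
        (Sum.inr (Path.Homotopic.Quotient.trans q₀ (castStart hy (symmQ (Path.Homotopic.Quotient.map q₀ f)))))
        (Sum.inr (Path.Homotopic.Quotient.trans q₀ (castStart hy (symmQ (Path.Homotopic.Quotient.map q₀ f))))) =
      Sum.inl (Quotient.mk (Path.Homotopic.setoid x₀ x₀) (Path.refl x₀)) ∧
    ∃ s : ZMod 2 → ExtGamma f x₀,
      s 1 = Sum.inr (Path.Homotopic.Quotient.trans q₀ (castStart hy (symmQ (Path.Homotopic.Quotient.map q₀ f)))) ∧
      (∀ ε ε' : ZMod 2, s (ε + ε') = extMul f hf x₀ (s ε) (s ε')) ∧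
      (∀ ε, etaMap f x₀ (s ε) = ε) := by
  set γ₁ : Path.Homotopic.Quotient x₀ (f x₀) :=
    q₀.trans (castStart hy (symmQ (q₀.map f))) with hγ₁
  have hsq : extMul f hf x₀ (Sum.inr γ₁) (Sum.inr γ₁) =
      Sum.inl (Quotient.mk (Path.Homotopic.setoid x₀ x₀) (Path.refl x₀)) := by
    show Sum.inl (γ₁.trans (castEnd (hf x₀) (γ₁.map f))) = _
    refine congrArg Sum.inl ?_
    rw [hγ₁]
    refine Quotient.inductionOn q₀ fun p => ?_
    exact gammaOne_sq f hf x₀ y hy p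
  refine ⟨rfl, hsq, ?_⟩
  refine ⟨fun ε => if ε = 0 then Sum.inl (⟦Path.refl x₀⟧ : Path.Homotopic.Quotient x₀ x₀) else Sum.inr γ₁, by norm_num, ?_, ?_⟩
  · have hmapr : Path.Homotopic.Quotient.map (⟦Path.refl x₀⟧ :
        Path.Homotopic.Quotient x₀ x₀) f = ⟦Path.refl (f x₀)⟧ := by
      rw [show Path.Homotopic.Quotient.map (⟦Path.refl x₀⟧ :
        Path.Homotopic.Quotient x₀ x₀) f = ⟦(Path.refl x₀).map f.continuous⟧ from rfl,
        show (Path.refl x₀).map f.continuous = Path.refl (f x₀) from by ext t; rfl]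
    intro ε ε'
    fin_cases ε <;> fin_cases ε'
    · show (if _ then _ else _) = extMul f hf x₀ (Sum.inl _) (Sum.inl _)
      rw [if_pos (by decide)]
      show Sum.inl _ = Sum.inl _
      exact congrArg Sum.inl (compQ_refl _).symm
    · show (if _ then _ else _) = extMul f hf x₀ (Sum.inl _) (Sum.inr γ₁)
      rw [if_neg (by decide)]
      show Sum.inr γ₁ = Sum.inr _
      rw [reflQ_comp]
    · show (if _ then _ else _) = extMul f hf x₀ (Sum.inr γ₁) (Sum.inl _)
      rw [if_neg (by decide)]
      show Sum.inr γ₁ = Sum.inr (γ₁.trans (Path.Homotopic.Quotient.map ⟦Path.refl x₀⟧ f))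
      rw [hmapr, compQ_refl]
    · show (if _ then _ else _) = extMul f hf x₀ (Sum.inr γ₁) (Sum.inr γ₁)
      rw [if_pos (by decide)]; exact hsq.symm
  · intro ε
    fin_cases ε <;> rfl
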